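/- If λ ∈ ℤ and λ ≡ ε (mod 2), then the principal series module I_{λ,ε} is irreducible. -/
import Mathlib


/-! The principal series module `I_{λ,ε}` in the compact picture: basis
`{w_k : k ≡ ε (mod 2)}`, parametrized as `k = ε + 2n`, with `w_{ε+2n}` encoded
as `Finsupp.single n 1` in `ℤ →₀ ℂ`. -/

/-- `H · w_k = k · w_k`. -/
noncomputable def psH (ε : ℤ) : (ℤ →₀ ℂ) →ₗ[ℂ] (ℤ →₀ ℂ) :=
  Finsupp.lsum ℂ fun n : ℤ => (((ε + 2 * n : ℤ) : ℂ)) • Finsupp.lsingle n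

/-- `E · w_k = ((λ+k+1)/2) · w_{k+2}`. -/
noncomputable def psE (L : ℂ) (ε : ℤ) : (ℤ →₀ ℂ) →ₗ[ℂ] (ℤ →₀ ℂ) :=
  Finsupp.lsum ℂ fun n : ℤ => ((L + ((ε + 2 * n : ℤ) : ℂ) + 1) / 2) • Finsupp.lsingle (n + 1)

/-- `F · w_k = ((λ−k+1)/2) · w_{k−2}`. -/
noncomputable def psF (L : ℂ) (ε : ℤ) : (ℤ →₀ ℂ) →ₗ[ℂ] (ℤ →₀ ℂ) :=
  Finsupp.lsum ℂ fun n : ℤ => ((L - ((ε + 2 * n : ℤ) : ℂ) + 1) / 2) • Finsupp.lsingle (n - 1)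

/-- A subspace of `I_{λ,ε}` is sl₂-invariant if it is stable under `H`, `E` and `F`. -/
def SL2Invariant (L : ℂ) (ε : ℤ) (W : Submodule ℂ (ℤ →₀ ℂ)) : Prop :=
  (∀ x ∈ W, psH ε x ∈ W) ∧ (∀ x ∈ W, psE L ε x ∈ W) ∧ (∀ x ∈ W, psF L ε x ∈ W)

lemma psH_apply (ε : ℤ) (v : ℤ →₀ ℂ) (k : ℤ) : (psH ε v) k = ((ε + 2*k : ℤ) : ℂ) * v k := by
  rw [psH, Finsupp.lsum_apply, Finsupp.sum_apply, Finsupp.sum]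
  rw [Finset.sum_eq_single k]
  · simp only [LinearMap.smul_apply, Finsupp.lsingle_apply, Finsupp.smul_apply,
      Finsupp.single_apply, eq_self_iff_true, if_true, smul_eq_mul]
  · intro b _ hb
    simp only [LinearMap.smul_apply, Finsupp.lsingle_apply, Finsupp.smul_apply,
      Finsupp.single_apply, if_neg hb, smul_eq_mul, mul_zero]
  · intro h
    rw [Finsupp.notMem_support_iff.mp h]; simp

lemma psE_single (L : ℂ) (ε : ℤ) (n : ℤ) :
    psE L ε (Finsupp.single n 1) = ((L + ((ε + 2*n : ℤ):ℂ) + 1)/2) • Finsupp.single (n+1) 1 := by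
  rw [psE, Finsupp.lsum_apply, Finsupp.sum_single_index]
  · simp only [LinearMap.smul_apply, Finsupp.lsingle_apply, Finsupp.smul_single, smul_eq_mul,
      mul_one]
  · simp

lemma psF_single (L : ℂ) (ε : ℤ) (n : ℤ) :
    psF L ε (Finsupp.single n 1) = ((L - ((ε + 2*n : ℤ):ℂ) + 1)/2) • Finsupp.single (n-1) 1 := by
  rw [psF, Finsupp.lsum_apply, Finsupp.sum_single_index]
  · simp only [LinearMap.smul_apply, Finsupp.lsingle_apply, Finsupp.smul_single, smul_eq_mul,
      mul_one]
  · simp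

/-- Extraction of components from an `H`-stable subspace. -/
lemma component_mem (ε : ℤ) (W : Submodule ℂ (ℤ →₀ ℂ)) (hH : ∀ x ∈ W, psH ε x ∈ W) :
    ∀ (N : ℕ) (v : ℤ →₀ ℂ), v.support.card ≤ N → v ∈ W →
      ∀ n : ℤ, Finsupp.single n (v n) ∈ W := by
  intro N
  induction N with
  | zero =>
    intro v hc hv n
    have : v.support = ∅ := Finset.card_eq_zero.mp (Nat.le_zero.mp hc)
    have hv0 : v = 0 := Finsupp.support_eq_empty.mp this
    simp [hv0]
  | succ N ih =>
    intro v hc hv n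
    by_cases hn : v n = 0
    · simp [hn]
    have hnsupp : n ∈ v.support := Finsupp.mem_support_iff.mpr hn
    -- u kills the n-component
    set u : ℤ →₀ ℂ := psH ε v - ((ε + 2*n : ℤ) : ℂ) • v with hu
    have huW : u ∈ W := Submodule.sub_mem _ (hH v hv) (Submodule.smul_mem _ _ hv)
    have hu_apply : ∀ k : ℤ, u k = (((2*(k - n) : ℤ)) : ℂ) * v k := by
      intro k
      simp only [hu, Finsupp.sub_apply, Finsupp.smul_apply, psH_apply, smul_eq_mul]
      push_cast
      ring
    have hu_supp : u.support = v.support.erase n := by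
      ext k
      simp only [Finsupp.mem_support_iff, Finset.mem_erase, hu_apply, mul_ne_zero_iff]
      constructor
      · rintro ⟨h1, h2⟩
        refine ⟨?_, h2⟩
        intro hk; subst hk; simp at h1
      · rintro ⟨h1, h2⟩
        refine ⟨?_, h2⟩
        simp only [ne_eq, Int.cast_eq_zero]
        omega
    have hcard : u.support.card ≤ N := by
      rw [hu_supp]
      have := Finset.card_erase_of_mem hnsupp
      omega
    -- components of v off n
    have hoff : ∀ k : ℤ, k ≠ n → Finsupp.single k (v k) ∈ W := by
      intro k hk
      have h1 : Finsupp.single k (u k) ∈ W := ih u hcard huW k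
      have hc2 : (((2*(k - n) : ℤ)) : ℂ) ≠ 0 := by
        simp only [ne_eq, Int.cast_eq_zero]; omega
      have : ((((2*(k - n) : ℤ)) : ℂ)⁻¹) • Finsupp.single k (u k) ∈ W :=
        Submodule.smul_mem _ _ h1
      rwa [hu_apply, Finsupp.smul_single, smul_eq_mul, inv_mul_cancel_left₀ hc2] at this
    -- v = single n (v n) + rest
    have hsum : v = Finsupp.single n (v n) + ∑ k ∈ v.support.erase n, Finsupp.single k (v k) := by
      conv_lhs => rw [← Finsupp.sum_single v, Finsupp.sum]
      rw [← Finset.add_sum_erase _ _ hnsupp]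
    have hrest : (∑ k ∈ v.support.erase n, Finsupp.single k (v k)) ∈ W := by
      apply Submodule.sum_mem
      intro k hk
      exact hoff k (Finset.ne_of_mem_erase hk)
    have : Finsupp.single n (v n) = v - ∑ k ∈ v.support.erase n, Finsupp.single k (v k) :=
      eq_sub_iff_add_eq.mpr hsum.symm
    rw [this]
    exact Submodule.sub_mem _ hv hrest

/-- If `λ ∈ ℤ` and `λ ≡ ε (mod 2)`, the principal series `I_{λ,ε}` is irreducible. -/
theorem principal_series_irreducible_of_same_parity (m : ℤ) (ε : ℤ) (hε : ε = 0 ∨ ε = 1)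
    (hpar : m % 2 = ε % 2) (W : Submodule ℂ (ℤ →₀ ℂ))
    (hW : SL2Invariant (m : ℂ) ε W) (hW0 : W ≠ ⊥) : W = ⊤ := by
  obtain ⟨hH, hE, hF⟩ := hW
  -- get a nonzero element
  obtain ⟨v, hvW, hv0⟩ : ∃ v ∈ W, v ≠ 0 := by
    by_contra h
    push_neg at h
    exact hW0 (by ext x; simp only [Submodule.mem_bot]; exact ⟨fun hx => h x hx, fun hx => hx ▸ W.zero_mem⟩)
  obtain ⟨n₀, hn₀⟩ : ∃ n, v n ≠ 0 := by
    by_contra h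
    push_neg at h
    exact hv0 (Finsupp.ext h)
  -- w_{n₀} ∈ W
  have hsingle : Finsupp.single n₀ (1 : ℂ) ∈ W := by
    have h1 : Finsupp.single n₀ (v n₀) ∈ W :=
      component_mem ε W hH v.support.card v le_rfl hvW n₀
    have := Submodule.smul_mem W (v n₀)⁻¹ h1
    rwa [Finsupp.smul_single, smul_eq_mul, inv_mul_cancel₀ hn₀] at this
  -- step up and down
  have hup : ∀ n : ℤ, Finsupp.single n (1 : ℂ) ∈ W → Finsupp.single (n+1) (1 : ℂ) ∈ W := by
    intro n hn
    have hEn := hE _ hn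
    rw [psE_single] at hEn
    have hc : ((m : ℂ) + ((ε + 2*n : ℤ) : ℂ) + 1) / 2 ≠ 0 := by
      have : ((m : ℂ) + ((ε + 2*n : ℤ) : ℂ) + 1) = ((m + ε + 2*n + 1 : ℤ) : ℂ) := by push_cast; ring
      rw [this]
      intro h
      rw [div_eq_zero_iff] at h
      rcases h with h | h
      · rw [Int.cast_eq_zero] at h; omega
      · norm_num at h
    have := Submodule.smul_mem W (((m : ℂ) + ((ε + 2*n : ℤ) : ℂ) + 1) / 2)⁻¹ hEn
    rwa [smul_smul, inv_mul_cancel₀ hc, one_smul] at this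
  have hdown : ∀ n : ℤ, Finsupp.single n (1 : ℂ) ∈ W → Finsupp.single (n-1) (1 : ℂ) ∈ W := by
    intro n hn
    have hFn := hF _ hn
    rw [psF_single] at hFn
    have hc : ((m : ℂ) - ((ε + 2*n : ℤ) : ℂ) + 1) / 2 ≠ 0 := by
      have : ((m : ℂ) - ((ε + 2*n : ℤ) : ℂ) + 1) = ((m - ε - 2*n + 1 : ℤ) : ℂ) := by push_cast; ring
      rw [this]
      intro h
      rw [div_eq_zero_iff] at h
      rcases h with h | h
      · rw [Int.cast_eq_zero] at h; omega
      · norm_num at h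
    have := Submodule.smul_mem W (((m : ℂ) - ((ε + 2*n : ℤ) : ℂ) + 1) / 2)⁻¹ hFn
    rwa [smul_smul, inv_mul_cancel₀ hc, one_smul] at this
  -- all basis vectors
  have hall : ∀ j : ℤ, Finsupp.single j (1 : ℂ) ∈ W := by
    have hplus : ∀ d : ℕ, Finsupp.single (n₀ + d) (1 : ℂ) ∈ W := by
      intro d
      induction d with
      | zero => simpa using hsingle
      | succ d ihd =>
        have := hup _ ihd
        have heq : (n₀ + (d : ℤ)) + 1 = n₀ + ((d : ℕ) + 1 : ℕ) := by push_cast; ring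
        rwa [heq] at this
    have hminus : ∀ d : ℕ, Finsupp.single (n₀ - d) (1 : ℂ) ∈ W := by
      intro d
      induction d with
      | zero => simpa using hsingle
      | succ d ihd =>
        have := hdown _ ihd
        have heq : (n₀ - (d : ℤ)) - 1 = n₀ - ((d : ℕ) + 1 : ℕ) := by push_cast; ring
        rwa [heq] at this
    intro j
    rcases le_or_gt n₀ j with h | h
    · have : j = n₀ + ((j - n₀).toNat : ℤ) := by omega
      rw [this]; exact hplus _
    · have : j = n₀ - ((n₀ - j).toNat : ℤ) := by omega
      rw [this]; exact hminus _
  -- conclude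
  rw [eq_top_iff]
  intro v _
  have : v = ∑ k ∈ v.support, (v k) • Finsupp.single k (1 : ℂ) := by
    conv_lhs => rw [← Finsupp.sum_single v, Finsupp.sum]
    refine Finset.sum_congr rfl fun k _ => ?_
    rw [Finsupp.smul_single, smul_eq_mul, mul_one]
  rw [this]
  exact Submodule.sum_mem _ fun k _ => Submodule.smul_mem _ _ (hall k)
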